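/- arXiv:2602.21330 — 6 statements merged into one kernel-verified Lean document; each statement's English description precedes it below -/
import Mathlib

section
/- Let K be an extremally disconnected topological space. The map Opens K → Clopens K sending an open subset to its closure (which is clopen) is a bounded lattice homomorphism: it sends the empty set to the empty set and K to K, and for all open subsets U, V of K it satisfies closure(U ∪ V) = closure(U) ∪ closure(V) and closure(U ∩ V) = closure(U) ∩ closure(V). -/
open TopologicalSpace

lemma closure_inter_open_ed {K : Type*} [TopologicalSpace K] [ExtremallyDisconnected K]
    {U V : Set K} (hU : IsOpen U) (hV : IsOpen V) :
    closure (U ∩ V) = closure U ∩ closure V := by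
  refine subset_antisymm (Set.subset_inter (closure_mono Set.inter_subset_left)
    (closure_mono Set.inter_subset_right)) ?_
  have h1 : closure U ∩ closure V ⊆ closure (closure U ∩ V) :=
    (ExtremallyDisconnected.open_closure U hU).inter_closure
  refine h1.trans ?_
  rw [show closure U ∩ V = V ∩ closure U by rw [Set.inter_comm]]
  calc closure (V ∩ closure U) ⊆ closure (closure (V ∩ U)) :=
        closure_mono (hV.inter_closure)
    _ = closure (U ∩ V) := by rw [closure_closure, Set.inter_comm]

/-- For an extremally disconnected space `K`, the map `Opens K → Clopens K` sending an open
set to its (clopen) closure is a bounded lattice homomorphism. -/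
theorem stmt2 {K : Type*} [TopologicalSpace K] [ExtremallyDisconnected K] :
    ∃ L : BoundedLatticeHom (Opens K) (Clopens K),
      ∀ U : Opens K, ((L U : Clopens K) : Set K) = closure (U : Set K) := by
  refine ⟨⟨⟨⟨fun U => ⟨closure (U : Set K),
      ⟨isClosed_closure, ExtremallyDisconnected.open_closure _ U.isOpen⟩⟩, ?_⟩, ?_⟩, ?_, ?_⟩, fun U => rfl⟩
  · intro U V
    ext1
    simp [closure_union]
    rfl
  · intro U V
    ext1
    exact closure_inter_open_ed U.isOpen V.isOpen
  · ext1; simp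
  · ext1; simp
end

section
/- Let S be a set, μ an ultrafilter on S, X : S → Type a family of types, and F the sheaf of types on the discrete space S whose sections over a subset U ⊆ S are the product ∏_{s ∈ U} X s, with restriction maps the projections. Then the stalk at the point μ ∈ Ultrafilter S of the pushforward sheaf pure_* F is naturally isomorphic to the ultraproduct ∫_S X dμ, i.e., to the filtered colimit over S0 ∈ μ (ordered by reverse inclusion) of the products ∏_{s ∈ S0} X s. -/
open CategoryTheory TopologicalSpace Opposite CategoryTheory.Limits
open scoped AlgebraicGeometry

universe u

/-- The ultraproduct `∫_S X dμ` of a family of types `X : S → Type` along an ultrafilter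
`μ` on `S`: the filtered colimit over `S0 ∈ μ` (ordered by reverse inclusion) of the
products `∏_{s ∈ S0} X s`, realized as the quotient of the disjoint union of these
products identifying two elements when they agree on some member of `μ`. -/
def UltraProd {S : Type u} (μ : Ultrafilter S) (X : S → Type u) : Type u :=
  Quot (fun (a b : (T : {T : Set S // T ∈ μ}) × ((s : (T.1 : Set S)) → X s)) =>
    ∃ (S2 : Set S) (_ : S2 ∈ μ) (ha : S2 ⊆ a.1.1) (hb : S2 ⊆ b.1.1),
      ∀ (s : S) (hs : s ∈ S2), a.2 ⟨s, ha hs⟩ = b.2 ⟨s, hb hs⟩)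

/-- The map `pure : S → Ultrafilter S`, as a morphism in `TopCat`. -/
def pureHom (S : Type u) [TopologicalSpace S] [DiscreteTopology S] :
    TopCat.of S ⟶ TopCat.of (Ultrafilter S) :=
  TopCat.ofHom ⟨pure, by
    show Continuous (pure : S → Ultrafilter S)
    exact continuous_of_discreteTopology⟩

/-- Let `S` be a discrete space, `μ` an ultrafilter on `S`, `X : S → Type` a family of
types and `F` the sheaf on `S` with `F(U) = ∏_{s ∈ U} X s`.  The stalk at
`μ ∈ Ultrafilter S` of the pushforward sheaf `pure_* F` is naturally isomorphic to the
ultraproduct `∫_S X dμ`, compatibly with germs of sections over the basic clopen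
neighbourhoods `{m | S0 ∈ m}` of `μ`. -/
theorem stmt7 (S : Type u) [TopologicalSpace S] [DiscreteTopology S]
    (μ : Ultrafilter S) (X : S → Type u) :
    ∃ e : (pureHom S _* TopCat.presheafToTypes (TopCat.of S) X).stalk μ ≃ UltraProd μ X,
      ∀ (S0 : Set S) (h : S0 ∈ μ) (x : (s : S0) → X s),
        e ((pureHom S _* TopCat.presheafToTypes (TopCat.of S) X).germ
            ⟨{m : Ultrafilter S | S0 ∈ m}, ultrafilter_isOpen_basic S0⟩ μ h
            (fun t => x ⟨t.1, Ultrafilter.mem_pure.mp t.2⟩))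
          = Quot.mk _ ⟨⟨S0, h⟩, x⟩ := by
  classical
  set P := pureHom S _* TopCat.presheafToTypes (TopCat.of S) X with hPdef
  have key : ∀ (V : Opens (TopCat.of (Ultrafilter S))), μ ∈ V →
      ((pureHom S) ⁻¹' V.1 : Set S) ∈ μ := by
    intro V hV
    obtain ⟨t, ⟨T, rfl⟩, hμt, htV⟩ :=
      ultrafilterBasis_is_basis.exists_subset_of_mem_open hV V.2
    exact Filter.mem_of_superset (show T ∈ μ from hμt)
      (fun s hs => htV (show T ∈ (pure s : Ultrafilter S) from Ultrafilter.mem_pure.mpr hs))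
  let K := (OpenNhds.inclusion μ).op ⋙ P
  let cc : Cocone K :=
  { pt := UltraProd μ X
    ι :=
    { app := fun W => TypeCat.ofHom fun f => Quot.mk _
        ⟨⟨(pureHom S) ⁻¹' W.unop.1.1, key W.unop.1 W.unop.2⟩,
          fun s => f ⟨s.1, s.2⟩⟩
      naturality := by
        intro W W' i
        ext f
        refine (Quot.sound ?_).symm
        refine ⟨(pureHom S) ⁻¹' W'.unop.1.1, key W'.unop.1 W'.unop.2,
          fun s hs => i.unop.le hs, fun s hs => hs, fun s hs => rfl⟩ } }
  let toF : P.stalk μ → UltraProd μ X := colimit.desc K cc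
  have hdesc : ∀ (U : Opens (TopCat.of (Ultrafilter S))) (hU : μ ∈ U) (f : P.obj (op U)),
      toF (P.germ U μ hU f) = Quot.mk _
        ⟨⟨(pureHom S) ⁻¹' U.1, key U hU⟩, fun s => f ⟨s.1, s.2⟩⟩ :=
    fun U hU f => ConcreteCategory.congr_hom (colimit.ι_desc cc (op ⟨U, hU⟩)) f
  let inv : UltraProd μ X → P.stalk μ := Quot.lift
    (fun a => P.germ ⟨{m : Ultrafilter S | a.1.1 ∈ m}, ultrafilter_isOpen_basic _⟩ μ a.1.2
        (fun t => a.2 ⟨t.1, Ultrafilter.mem_pure.mp t.2⟩))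
    (by
      rintro ⟨⟨Ta, hTa⟩, xa⟩ ⟨⟨Tb, hTb⟩, xb⟩ ⟨S2, hS2, ha, hb, h⟩
      refine TopCat.Presheaf.germ_ext P
        ⟨{m : Ultrafilter S | S2 ∈ m}, ultrafilter_isOpen_basic _⟩ hS2
        (homOfLE fun m hm => Filter.mem_of_superset hm ha)
        (homOfLE fun m hm => Filter.mem_of_superset hm hb) ?_
      funext t
      exact h t.1 (Ultrafilter.mem_pure.mp t.2))
  have hinv : ∀ (T : Set S) (hT : T ∈ μ) (x : (s : (T : Set S)) → X s),
      inv (Quot.mk _ ⟨⟨T, hT⟩, x⟩) =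
        P.germ ⟨{m : Ultrafilter S | T ∈ m}, ultrafilter_isOpen_basic _⟩ μ hT
          (fun t => x ⟨t.1, Ultrafilter.mem_pure.mp t.2⟩) := fun _ _ _ => rfl
  have hmk : ∀ (U : Opens (TopCat.of (Ultrafilter S))) (hU : μ ∈ U) (f : P.obj (op U)),
      (Quot.mk _ ⟨⟨(pureHom S) ⁻¹' U.1, key U hU⟩,
          fun s => f ⟨s.1, s.2⟩⟩ : UltraProd μ X) = Quot.mk _ ⟨⟨(pureHom S) ⁻¹' U.1, key U hU⟩, fun s => f ⟨s.1, s.2⟩⟩ := fun _ _ _ => rfl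
  refine ⟨{ toFun := toF, invFun := inv
            left_inv := ?_
            right_inv := ?_ }, ?_⟩
  · intro t
    obtain ⟨U, hU, f, rfl⟩ := P.germ_exist (x := μ) t
    refine (congrArg inv (hdesc U hU f)).trans ?_
    refine TopCat.Presheaf.germ_ext P
      (⟨{m : Ultrafilter S | (pureHom S) ⁻¹' U.1 ∈ m},
        ultrafilter_isOpen_basic _⟩ ⊓ U) ⟨key U hU, hU⟩
      (homOfLE inf_le_left) (homOfLE inf_le_right) ?_
    funext t
    rfl
  · intro q
    induction q using Quot.ind with
    | _ a =>
      obtain ⟨⟨T, hT⟩, x⟩ := a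
      rw [hinv]
      refine (hdesc _ _ _).trans ?_
      exact Quot.sound ⟨T, hT, fun s hs => Ultrafilter.mem_pure.mpr hs, fun s hs => hs,
        fun s hs => rfl⟩
  · intro S0 h x
    show toF _ = _
    refine (hdesc _ _ _).trans ?_
    exact Quot.sound ⟨S0, h, fun s hs => Ultrafilter.mem_pure.mpr hs, fun s hs => hs,
      fun s hs => rfl⟩
end

section
/- Let S be a set. The pushforward functor pure_* along the map pure : S → Ultrafilter S, from the category of sheaves of types on the discrete space S to the category of sheaves of types on Ultrafilter S, preserves epimorphisms: if φ : F → G is an epimorphism of sheaves of types on S, then pure_* φ : pure_* F → pure_* G is an epimorphism of sheaves of types on Ultrafilter S. -/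
open CategoryTheory

universe u

open Opposite TopologicalSpace

/-- On a discrete space, an epimorphism of sheaves of types is surjective on all sections. -/
lemma app_surjective_of_epi (S : Type u) [TopologicalSpace S] [DiscreteTopology S]
    (F G : TopCat.Sheaf (Type u) (TopCat.of S)) (φ : F ⟶ G) (hφ : Epi φ)
    (U : Opens (TopCat.of S)) : Function.Surjective (φ.hom.app (op U)) := by
  haveI : DiscreteTopology ↑(TopCat.of S) := ‹DiscreteTopology S›
  intro g
  have hls : Sheaf.IsLocallySurjective φ := by
    apply (Sheaf.isLocallySurjective_iff_epi _).2
    exact hφ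
  -- the cover of `U` by open singletons
  let V : U → Opens (TopCat.of S) := fun i => ⟨{i.1}, isOpen_discrete _⟩
  have hiV : ∀ i : U, V i ≤ U := by
    rintro i x rfl
    exact i.2
  have hcover : U ≤ iSup V := by
    intro x hx
    exact Opens.mem_iSup.2 ⟨⟨x, hx⟩, rfl⟩
  -- sections of `F` over each singleton, mapping to the restriction of `g`
  have hsf : ∀ i : U, ∃ s : F.val.obj (op (V i)),
      φ.hom.app (op (V i)) s = G.val.map (homOfLE (hiV i)).op g := by
    intro i
    obtain ⟨W, ι, ⟨s, hs⟩, hiW⟩ := hls.imageSieve_mem g i.1 i.2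
    have hVW : V i ≤ W := by rintro x rfl; exact hiW
    refine ⟨F.val.map (homOfLE hVW).op s, ?_⟩
    have hs' : φ.hom.app (op W) s = G.val.map ι.op g := hs
    have hnat := ConcreteCategory.congr_hom (φ.hom.naturality (homOfLE hVW).op) s
    dsimp at hnat
    rw [hnat, hs', ← FunctorToTypes.map_comp_apply]
    congr 1
  choose sf hsfspec using hsf
  -- sections over singletons are automatically compatible
  have hcomp : TopCat.Presheaf.IsCompatible F.val V sf := by
    intro i j
    by_cases h : i = j
    · subst h
      congr 1
    · have hbot : V i ⊓ V j = ⊥ := by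
        rw [eq_bot_iff]
        rintro x ⟨rfl, h2⟩
        exact h (Subtype.ext h2)
      haveI : Unique (F.val.obj (op (V i ⊓ V j))) :=
        Limits.Types.isTerminalEquivUnique _ (F.isTerminalOfEqEmpty hbot)
      apply Subsingleton.elim (α := F.val.obj (op (V i ⊓ V j)))
  obtain ⟨f, hfspec, -⟩ := F.existsUnique_gluing' V U (fun i => homOfLE (hiV i)) hcover sf hcomp
  refine ⟨f, ?_⟩
  apply G.eq_of_locally_eq' V U (fun i => homOfLE (hiV i)) hcover
  intro i
  have hf' : F.val.map (homOfLE (hiV i)).op f = sf i := hfspec i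
  have hnat := ConcreteCategory.congr_hom (φ.hom.naturality (homOfLE (hiV i)).op) f
  dsimp at hnat
  show G.val.map (homOfLE (hiV i)).op (φ.hom.app (op U) f) = G.val.map (homOfLE (hiV i)).op g
  rw [← hnat, hf', hsfspec i]

/-- Pushforward along `pure : S → Ultrafilter S`, from sheaves of types on the discrete
space `S` to sheaves of types on `Ultrafilter S`, preserves epimorphisms. -/
theorem stmt11 (S : Type u) [TopologicalSpace S] [DiscreteTopology S]
    (F G : TopCat.Sheaf (Type u) (TopCat.of S)) (φ : F ⟶ G) (hφ : Epi φ) :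
    Epi ((TopCat.Sheaf.pushforward (Type u) (pureHom S)).map φ) := by
  apply (Sheaf.isLocallySurjective_iff_epi _).1
  exact Presheaf.isLocallySurjective_of_surjective _ _
    (fun V => app_surjective_of_epi S F G φ hφ _)
end

section
/- Let S be a set. The pushforward functor pure_* along the map pure : S → Ultrafilter S, from the category of sheaves of types on the discrete space S to the category of sheaves of types on Ultrafilter S, preserves finite coproducts. -/
open CategoryTheory

universe u

namespace Stmt12Aux

open CategoryTheory.Limits TopologicalSpace Opposite

section Generic

variable {X : TopCat.{u}}

lemma res_res (F : X.Presheaf (Type u)) {a b c : Opens X} (h1 : a ≤ b) (h2 : b ≤ c)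
    (t : F.obj (op c)) :
    F.map (homOfLE h1).op (F.map (homOfLE h2).op t) = F.map (homOfLE (h1.trans h2)).op t := by
  rw [← FunctorToTypes.map_comp_apply]; rfl

lemma res_self (F : X.Presheaf (Type u)) {a : Opens X} (h : a ≤ a) (t : F.obj (op a)) :
    F.map (homOfLE h).op t = t := by
  have : (homOfLE h).op = 𝟙 (op a) := rfl
  rw [this, FunctorToTypes.map_id_apply]

lemma subsingleton_of_eq_bot (F : TopCat.Sheaf (Type u) X) {V : Opens X} (hV : V = ⊥) :
    Subsingleton (F.1.obj (op V)) := by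
  constructor
  intro s t
  apply F.eq_of_locally_eq' (fun i : PEmpty.{u+1} => ⊥) V (fun i => i.elim)
  · intro x hx
    rw [hV] at hx
    exact hx.elim
  · exact fun i => i.elim

end Generic

section Discrete

variable {X : TopCat.{u}} [DiscreteTopology X]

def sing (s : X) : Opens X := ⟨{s}, isOpen_discrete _⟩

lemma sing_le {B : Opens X} (x : ↥B) : sing (x : X) ≤ B := by
  intro y hy
  have hy' : y = (x : X) := hy
  rw [hy']
  exact x.2

variable {J : Type} (F : J → TopCat.Sheaf (Type u) X)

/-- The type family of "labelled singleton sections". -/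
def TF (s : X) : Type u := Σ j : J, (F j).1.obj (op (sing s))

/-- Candidate coproduct sheaf: sheaf of (dependent) functions into `TF`. -/
noncomputable def QF : TopCat.Sheaf (Type u) X :=
  TopCat.sheafToTypes X (TF F)

/-- Coprojection. -/
def ιF (j : J) : F j ⟶ QF F where
  hom :=
    { app := fun A => TypeCat.ofHom fun t x => ⟨j, (F j).1.map (homOfLE (sing_le x)).op t⟩
      naturality := by
        intro A B i
        apply ConcreteCategory.hom_ext; intro t
        funext x
        dsimp [QF, TopCat.sheafToTypes, TopCat.presheafToTypes]
        show (⟨j, _⟩ : TF F _) = ⟨j, _⟩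
        rw [← FunctorToTypes.map_comp_apply]
        congr 1 }

variable {F}

/-- The label of a point. -/
def lab {U : Opens X} (g : ∀ x : ↥U, TF F (x : X)) (x : ↥U) : J := (g x).1

/-- The (open) set of points with label `j`. -/
def Aop {U : Opens X} (g : ∀ x : ↥U, TF F (x : X)) (j : J) : Opens X :=
  ⟨{s : X | ∃ h : s ∈ U, lab g ⟨s, h⟩ = j}, isOpen_discrete _⟩

lemma Aop_le {U : Opens X} (g : ∀ x : ↥U, TF F (x : X)) (j : J) : Aop g j ≤ U := by
  rintro s ⟨h, -⟩
  exact h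

lemma Aop_disjoint {U : Opens X} (g : ∀ x : ↥U, TF F (x : X)) {j j' : J} (h : j ≠ j') :
    Aop g j ⊓ Aop g j' = ⊥ := by
  apply le_bot_iff.mp
  rintro s ⟨⟨h1, e1⟩, ⟨h2, e2⟩⟩
  exact absurd (e1.symm.trans e2) h

lemma Aop_union {U : Opens X} (g : ∀ x : ↥U, TF F (x : X)) :
    (U : Set X) ⊆ ⋃ j, (Aop g j : Set X) := by
  intro s hs
  exact Set.mem_iUnion.2 ⟨lab g ⟨s, hs⟩, ⟨hs, rfl⟩⟩

/-- The singleton-section data of `g` over `B`, relabelled to land in `F j`. -/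
noncomputable def dval {U : Opens X} (g : ∀ x : ↥U, TF F (x : X)) (j : J) {B : Opens X}
    (hB : B ≤ Aop g j) (x : ↥B) : (F j).1.obj (op (sing (x : X))) :=
  (hB x.2).choose_spec ▸ (g ⟨(x : X), (hB x.2).choose⟩).2

lemma partEU {U : Opens X} (g : ∀ x : ↥U, TF F (x : X)) (j : J) {B : Opens X}
    (hB : B ≤ Aop g j) :
    ∃! t : (F j).1.obj (op B),
      ∀ x : ↥B, (F j).1.map (homOfLE (sing_le x)).op t = dval g j hB x := by
  have hcomp : TopCat.Presheaf.IsCompatible (F j).1 (fun x : ↥B => sing (x : X))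
      (dval g j hB) := by
    intro x y
    by_cases hxy : (x : X) = (y : X)
    · cases Subtype.ext hxy
      rfl
    · have hb : sing (x : X) ⊓ sing (y : X) = ⊥ := by
        apply le_bot_iff.mp
        rintro z ⟨hz1, hz2⟩
        exact absurd ((Set.mem_singleton_iff.mp hz1).symm.trans
          (Set.mem_singleton_iff.mp hz2)) hxy
      exact @Subsingleton.elim _ (subsingleton_of_eq_bot (F j) hb) _ _
  exact (F j).existsUnique_gluing' (fun x : ↥B => sing (x : X)) B
    (fun x => homOfLE (sing_le x))
    (fun s hs => Opens.mem_iSup.2 ⟨⟨s, hs⟩, rfl⟩) (dval g j hB) hcomp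

/-- The canonical `F j`-section over an open set all whose points are labelled `j`. -/
noncomputable def part {U : Opens X} (g : ∀ x : ↥U, TF F (x : X)) (j : J) {B : Opens X}
    (hB : B ≤ Aop g j) : (F j).1.obj (op B) :=
  (partEU g j hB).choose

lemma part_spec {U : Opens X} (g : ∀ x : ↥U, TF F (x : X)) (j : J) {B : Opens X}
    (hB : B ≤ Aop g j) (x : ↥B) :
    (F j).1.map (homOfLE (sing_le x)).op (part g j hB) = dval g j hB x :=
  (partEU g j hB).choose_spec.1 x

lemma part_unique {U : Opens X} (g : ∀ x : ↥U, TF F (x : X)) (j : J) {B : Opens X}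
    (hB : B ≤ Aop g j) (t : (F j).1.obj (op B))
    (ht : ∀ x : ↥B, (F j).1.map (homOfLE (sing_le x)).op t = dval g j hB x) :
    t = part g j hB :=
  (partEU g j hB).choose_spec.2 t ht

lemma part_res {U : Opens X} (g : ∀ x : ↥U, TF F (x : X)) (j : J) {B B' : Opens X}
    (hB : B ≤ Aop g j) (h' : B' ≤ B) :
    (F j).1.map (homOfLE h').op (part g j hB) = part g j (h'.trans hB) := by
  apply part_unique
  intro x
  rw [res_res]
  exact part_spec g j hB ⟨(x : X), h' x.2⟩

/-- Restriction of a section of `QF`. -/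
def gRes {U U' : Opens X} (h : U' ≤ U) (g : ∀ x : ↥U, TF F (x : X)) (x : ↥U') : TF F (x : X) :=
  g ⟨(x : X), h x.2⟩

lemma Aop_gRes_le {U U' : Opens X} (h : U' ≤ U) (g : ∀ x : ↥U, TF F (x : X)) (j : J) :
    Aop (gRes h g) j ≤ Aop g j := by
  rintro s ⟨hs, e⟩
  exact ⟨h hs, e⟩

lemma part_gRes {U U' : Opens X} (h : U' ≤ U) (g : ∀ x : ↥U, TF F (x : X)) (j : J) {B : Opens X}
    (hB : B ≤ Aop (gRes h g) j) :
    part (gRes h g) j hB = part g j (hB.trans (Aop_gRes_le h g j)) := rfl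

lemma sigma_eta {s : X} {j : J} (p : TF F s) (h : p.1 = j) :
    (⟨j, h ▸ p.2⟩ : TF F s) = p := by
  cases p
  cases h
  rfl

end Discrete

section Main

variable {X : TopCat.{u}} [DiscreteTopology X] {J : Type} {F : J → TopCat.Sheaf (Type u) X}
variable {Y : TopCat.{u}} {f : X ⟶ Y}

variable (hH : ∀ (V : Opens Y) (g : ∀ x : ↥((Opens.map f).obj V), TF F (x : X)),
    ∃ W : J → Opens Y, (∀ j, W j ≤ V) ∧ (∀ j j', j ≠ j' → W j ⊓ W j' = ⊥) ∧
      (V ≤ ⨆ j, W j) ∧ ∀ j, (Opens.map f).obj (W j) = Aop g j)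

/-- The chosen decomposition of `V` according to the labels of `g`. -/
noncomputable def Wfam (V : Opens Y) (g : ∀ x : ↥((Opens.map f).obj V), TF F (x : X)) :
    J → Opens Y := (hH V g).choose

lemma Wfam_le (V : Opens Y) (g : ∀ x : ↥((Opens.map f).obj V), TF F (x : X)) (j : J) :
    Wfam hH V g j ≤ V := (hH V g).choose_spec.1 j

lemma Wfam_disj (V : Opens Y) (g : ∀ x : ↥((Opens.map f).obj V), TF F (x : X)) {j j' : J}
    (h : j ≠ j') : Wfam hH V g j ⊓ Wfam hH V g j' = ⊥ := (hH V g).choose_spec.2.1 j j' h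

lemma Wfam_cover (V : Opens Y) (g : ∀ x : ↥((Opens.map f).obj V), TF F (x : X)) :
    V ≤ ⨆ j, Wfam hH V g j := (hH V g).choose_spec.2.2.1

lemma Wfam_pre (V : Opens Y) (g : ∀ x : ↥((Opens.map f).obj V), TF F (x : X)) (j : J) :
    (Opens.map f).obj (Wfam hH V g j) = Aop g j := (hH V g).choose_spec.2.2.2 j

variable (E : Cocone (Discrete.functor F ⋙ TopCat.Sheaf.pushforward (Type u) f))

/-- The pieces to be glued. -/
noncomputable def sfW (V : Opens Y) (g : ∀ x : ↥((Opens.map f).obj V), TF F (x : X)) (j : J) :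
    E.pt.1.obj (op (Wfam hH V g j)) :=
  (E.ι.app ⟨j⟩).hom.app (op (Wfam hH V g j))
    (show (F j).1.obj (op ((Opens.map f).obj (Wfam hH V g j))) from
      part g j (le_of_eq (Wfam_pre hH V g j)))

lemma descEU (V : Opens Y) (g : ∀ x : ↥((Opens.map f).obj V), TF F (x : X)) :
    ∃! σ : E.pt.1.obj (op V),
      ∀ j : J, E.pt.1.map (homOfLE (Wfam_le hH V g j)).op σ = sfW hH E V g j := by
  have hcomp : TopCat.Presheaf.IsCompatible E.pt.1
      (fun i : ULift.{u} J => Wfam hH V g i.down) (fun i => sfW hH E V g i.down) := by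
    intro i i'
    by_cases hii : i.down = i'.down
    · cases i; cases i'
      cases hii
      rfl
    · exact @Subsingleton.elim _
        (subsingleton_of_eq_bot E.pt (Wfam_disj hH V g hii)) _ _
  obtain ⟨σ, h1, h2⟩ := E.pt.existsUnique_gluing'
    (fun i : ULift.{u} J => Wfam hH V g i.down) V
    (fun i => homOfLE (Wfam_le hH V g i.down))
    (le_trans (Wfam_cover hH V g) (iSup_le fun j => le_iSup (fun i : ULift.{u} J => Wfam hH V g i.down) (ULift.up j)))
    (fun i => sfW hH E V g i.down) hcomp
  exact ⟨σ, fun j => h1 (ULift.up j), fun σ' h' => h2 σ' (fun i => h' i.down)⟩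

/-- The glued section: the value of the descent morphism. -/
noncomputable def descApp (V : Opens Y) (g : ∀ x : ↥((Opens.map f).obj V), TF F (x : X)) :
    E.pt.1.obj (op V) := (descEU hH E V g).choose

lemma descApp_glue (V : Opens Y) (g : ∀ x : ↥((Opens.map f).obj V), TF F (x : X)) (j : J) :
    E.pt.1.map (homOfLE (Wfam_le hH V g j)).op (descApp hH E V g) = sfW hH E V g j :=
  (descEU hH E V g).choose_spec.1 j

lemma descApp_unique (V : Opens Y) (g : ∀ x : ↥((Opens.map f).obj V), TF F (x : X))
    (σ : E.pt.1.obj (op V))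
    (hσ : ∀ j : J, E.pt.1.map (homOfLE (Wfam_le hH V g j)).op σ = sfW hH E V g j) :
    σ = descApp hH E V g :=
  (descEU hH E V g).choose_spec.2 σ hσ

variable (hD : ∀ V : Opens Y, (Opens.map f).obj V = ⊥ → V = ⊥)

include hD in
lemma descApp_res (V : Opens Y) (g : ∀ x : ↥((Opens.map f).obj V), TF F (x : X)) (j : J)
    (O : Opens Y) (hOV : O ≤ V) (hO : (Opens.map f).obj O ≤ Aop g j) :
    E.pt.1.map (homOfLE hOV).op (descApp hH E V g) =
      (E.ι.app ⟨j⟩).hom.app (op O)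
        (show (F j).1.obj (op ((Opens.map f).obj O)) from part g j hO) := by
  apply E.pt.eq_of_locally_eq' (fun i : ULift.{u} J => O ⊓ Wfam hH V g i.down) O
    (fun i => homOfLE inf_le_left)
  · intro y hy
    obtain ⟨j', hj'⟩ := Opens.mem_iSup.mp (Wfam_cover hH V g (hOV hy))
    exact Opens.mem_iSup.mpr ⟨ULift.up j', ⟨hy, hj'⟩⟩
  · intro i
    by_cases hjj : i.down = j
    · subst hjj
      have hstep : E.pt.1.map (homOfLE inf_le_left).op
          (E.pt.1.map (homOfLE hOV).op (descApp hH E V g))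
          = E.pt.1.map (homOfLE inf_le_right).op (sfW hH E V g i.down) := by
        rw [res_res, ← descApp_glue hH E V g i.down, res_res]
      refine hstep.trans ?_
      refine (NatTrans.naturality_apply (E.ι.app ⟨i.down⟩).hom
        (homOfLE (inf_le_right : O ⊓ Wfam hH V g i.down ≤ _)).op _).symm.trans ?_
      refine Eq.trans ?_ (NatTrans.naturality_apply (E.ι.app ⟨i.down⟩).hom
        (homOfLE (inf_le_left : O ⊓ Wfam hH V g i.down ≤ O)).op _)
      refine congrArg ((E.ι.app ⟨i.down⟩).hom.app (op (O ⊓ Wfam hH V g i.down))) ?_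
      have hle1 : (Opens.map f).obj (O ⊓ Wfam hH V g i.down) ≤
          (Opens.map f).obj (Wfam hH V g i.down) := fun s hs => hs.2
      have hle2 : (Opens.map f).obj (O ⊓ Wfam hH V g i.down) ≤ (Opens.map f).obj O :=
        fun s hs => hs.1
      show (F i.down).1.map (homOfLE hle1).op (part g i.down (le_of_eq (Wfam_pre hH V g i.down)))
        = (F i.down).1.map (homOfLE hle2).op (part g i.down hO)
      exact (part_res g i.down (le_of_eq (Wfam_pre hH V g i.down)) hle1).trans
        (part_res g i.down hO hle2).symm
    · have hbot : O ⊓ Wfam hH V g i.down = ⊥ := by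
        apply hD
        apply le_bot_iff.mp
        rintro s ⟨hs1, hs2⟩
        have h1 : s ∈ Aop g j := hO hs1
        have h2 : s ∈ Aop g i.down := (Wfam_pre hH V g i.down) ▸ hs2
        have hdis := Aop_disjoint g hjj
        exact hdis ▸ (⟨h2, h1⟩ : s ∈ Aop g i.down ⊓ Aop g j)
      exact @Subsingleton.elim _ (subsingleton_of_eq_bot E.pt hbot) _ _

include hD in
lemma descApp_natural {V V' : Opens Y} (hVV : V' ≤ V)
    (g : ∀ x : ↥((Opens.map f).obj V), TF F (x : X)) :
    E.pt.1.map (homOfLE hVV).op (descApp hH E V g)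
      = descApp hH E V' (gRes (fun s hs => hVV hs) g) := by
  have hf : (Opens.map f).obj V' ≤ (Opens.map f).obj V := fun s hs => hVV hs
  apply descApp_unique
  intro j
  rw [res_res]
  refine Eq.trans (descApp_res hH E hD V g j (Wfam hH V' (gRes hf g) j)
      ((Wfam_le hH V' _ j).trans hVV)
      ((le_of_eq (Wfam_pre hH V' (gRes hf g) j)).trans (Aop_gRes_le hf g j))) ?_
  exact congrArg ((E.ι.app ⟨j⟩).hom.app _)
    (part_gRes hf g j (le_of_eq (Wfam_pre hH V' (gRes hf g) j))).symm

include hH hD in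
/-- The descent morphism. -/
noncomputable def descHom : (TopCat.Sheaf.pushforward (Type u) f).obj (QF F) ⟶ E.pt where
  hom :=
    { app := fun V => TypeCat.ofHom fun g => descApp hH E V.unop g
      naturality := by
        intro A B i
        apply ConcreteCategory.hom_ext; intro g
        exact (descApp_natural hH E hD (leOfHom i.unop) g).symm }

include hH hD in
/-- The pushforward of the canonical cofan is a colimit cocone. -/
noncomputable def pushCofanIsColimit :
    IsColimit ((TopCat.Sheaf.pushforward (Type u) f).mapCocone
      (Cofan.mk (QF F) (fun j => ιF F j))) where
  desc E := descHom hH E hD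
  fac := by
    rintro E ⟨j⟩
    refine Sheaf.hom_ext (NatTrans.ext (funext fun V => ConcreteCategory.hom_ext _ _ fun t => ?_))
    show descApp hH E (unop V)
        (fun x => ⟨j, (F j).1.map (homOfLE (sing_le x)).op t⟩) = (E.ι.app ⟨j⟩).hom.app V t
    refine ((res_self E.pt.1 (le_refl (unop V)) _).symm).trans
      ((descApp_res hH E hD (unop V)
        (fun x => ⟨j, (F j).1.map (homOfLE (sing_le x)).op t⟩) j (unop V) (le_refl _)
        (fun s hs => ⟨hs, rfl⟩)).trans ?_)
    exact congrArg ((E.ι.app ⟨j⟩).hom.app V)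
      (part_unique (fun x => ⟨j, (F j).1.map (homOfLE (sing_le x)).op t⟩) j
        (fun s hs => ⟨hs, rfl⟩) t (fun x => rfl)).symm
  uniq := by
    intro E m hm
    refine Sheaf.hom_ext (NatTrans.ext (funext fun V => ConcreteCategory.hom_ext _ _ fun g => ?_))
    refine descApp_unique hH E (unop V) g (m.hom.app V g) ?_
    intro j
    have hB : (Opens.map f).obj (Wfam hH (unop V) g j) ≤ Aop g j :=
      le_of_eq (Wfam_pre hH (unop V) g j)
    have hg : (((TopCat.Sheaf.pushforward (Type u) f).map (ιF F j)).hom.app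
          (op (Wfam hH (unop V) g j))
          (show (F j).1.obj (op ((Opens.map f).obj (Wfam hH (unop V) g j))) from part g j hB))
        = (fun x : ↥((Opens.map f).obj (Wfam hH (unop V) g j)) =>
            g ⟨(x : X), Wfam_le hH (unop V) g j x.2⟩) := by
      funext x
      show (⟨j, (F j).1.map (homOfLE (sing_le x)).op (part g j hB)⟩ : TF F (x : X)) = _
      rw [part_spec g j hB x]
      exact sigma_eta _ ((hB x.2).choose_spec)
    refine ((NatTrans.naturality_apply m.hom
      (homOfLE (Wfam_le hH (unop V) g j)).op g).symm).trans ?_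
    refine Eq.trans (congrArg (m.hom.app (op (Wfam hH (unop V) g j))) hg.symm) ?_
    exact congrArg (fun (φ : (TopCat.Sheaf.pushforward (Type u) f).obj (F j) ⟶ E.pt) =>
      φ.hom.app (op (Wfam hH (unop V) g j))
        (show (F j).1.obj (op ((Opens.map f).obj (Wfam hH (unop V) g j))) from part g j hB))
      (hm ⟨j⟩)

end Main

section Assemble

variable {S : Type u} [TopologicalSpace S] [DiscreteTopology S]

instance : DiscreteTopology ↥(TopCat.of S) := ‹DiscreteTopology S›

lemma mem_of_mem_open {V : Set (Ultrafilter S)} (hV : IsOpen V) {μ : Ultrafilter S}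
    (hμ : μ ∈ V) : (fun s : S => (pure s : Ultrafilter S)) ⁻¹' V ∈ μ := by
  obtain ⟨t, ht, hμt, htV⟩ := ultrafilterBasis_is_basis.exists_subset_of_mem_open hμ hV
  obtain ⟨A, rfl⟩ := ht
  have hμA : A ∈ μ := hμt
  refine Filter.mem_of_superset hμA ?_
  intro s hs
  exact htV (Ultrafilter.mem_pure.mpr hs)

-- view the statement through `pureHom`
lemma pure_mem_of_open {V : Opens (TopCat.of (Ultrafilter S))} {μ : Ultrafilter S}
    (hμ : μ ∈ V) : ((Opens.map (pureHom S)).obj V).1 ∈ μ :=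
  by exact mem_of_mem_open V.2 hμ

lemma hD_pure (V : Opens (TopCat.of (Ultrafilter S)))
    (h : (Opens.map (pureHom S)).obj V = ⊥) : V = ⊥ := by
  apply le_bot_iff.mp
  intro μ hμ
  have h1 := pure_mem_of_open hμ
  rw [h] at h1
  exact absurd h1 (by simpa using fun h => Ultrafilter.empty_not_mem (f := μ) h)

variable {J : Type} [Fintype J] (F : J → TopCat.Sheaf (Type u) (TopCat.of S))

lemma hH_pure : ∀ (V : Opens (TopCat.of (Ultrafilter S)))
    (g : ∀ x : ↥((Opens.map (pureHom S)).obj V), TF F x.1),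
    ∃ W : J → Opens (TopCat.of (Ultrafilter S)), (∀ j, W j ≤ V) ∧
      (∀ j j', j ≠ j' → W j ⊓ W j' = ⊥) ∧ (V ≤ ⨆ j, W j) ∧
      ∀ j, (Opens.map (pureHom S)).obj (W j) = Aop g j := by
  intro V g
  let A : J → Set S := fun j => {s : S | s ∈ Aop g j}
  refine ⟨fun j => V ⊓ ⟨{μ : Ultrafilter S | A j ∈ μ}, ultrafilter_isOpen_basic _⟩,
    fun j => inf_le_left, ?_, ?_, ?_⟩
  · intro j j' hjj
    apply le_bot_iff.mp
    rintro μ ⟨⟨-, h1⟩, ⟨-, h2⟩⟩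
    let ν : Ultrafilter S := μ
    have h1' : A j ∈ ν := h1
    have h2' : A j' ∈ ν := h2
    have hint : A j ∩ A j' ∈ ν := Filter.inter_mem h1' h2'
    have hbot : A j ∩ A j' = (∅ : Set S) := by
      apply Set.eq_empty_iff_forall_notMem.mpr
      rintro s ⟨m1, m2⟩
      have hmem : s ∈ (⊥ : Opens (TopCat.of S)) :=
        (Aop_disjoint g hjj) ▸ (⟨m1, m2⟩ : s ∈ Aop g j ⊓ Aop g j')
      exact hmem
    rw [hbot] at hint
    exact absurd hint Ultrafilter.empty_notMem
  · intro μ hμ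
    let ν : Ultrafilter S := μ
    have h1 : ((Opens.map (pureHom S)).obj V).1 ∈ ν := pure_mem_of_open hμ
    have h2 : (⋃ j, A j) ∈ ν :=
      Filter.mem_of_superset h1 (Aop_union g)
    rw [← Set.biUnion_univ] at h2
    obtain ⟨j, -, hj⟩ := (Ultrafilter.finite_biUnion_mem_iff Set.finite_univ).mp h2
    exact Opens.mem_iSup.mpr ⟨j, ⟨hμ, hj⟩⟩
  · intro j
    apply Opens.ext
    ext s
    constructor
    · rintro ⟨-, h2⟩
      exact Ultrafilter.mem_pure.mp (show A j ∈ (pure s : Ultrafilter S) from h2)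
    · intro hs
      exact ⟨Aop_le g j hs, (show A j ∈ (pure s : Ultrafilter S) from Ultrafilter.mem_pure.mpr hs)⟩

/-- The canonical cofan on the discrete space is a colimit. -/
noncomputable def cofanIsColimit : IsColimit (Cofan.mk (QF F) (fun j => ιF F j)) := by
  have hH_id : ∀ (V : Opens (TopCat.of S))
      (g : ∀ x : ↥((Opens.map (𝟙 (TopCat.of S))).obj V), TF F x.1),
      ∃ W : J → Opens (TopCat.of S), (∀ j, W j ≤ V) ∧
        (∀ j j', j ≠ j' → W j ⊓ W j' = ⊥) ∧ (V ≤ ⨆ j, W j) ∧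
        ∀ j, (Opens.map (𝟙 (TopCat.of S))).obj (W j) = Aop g j := by
    intro V g
    refine ⟨fun j => Aop g j, fun j => Aop_le g j, fun j j' h => Aop_disjoint g h, ?_, fun j => rfl⟩
    intro s hs
    obtain ⟨j, hj⟩ := Set.mem_iUnion.mp (Aop_union g hs)
    exact Opens.mem_iSup.mpr ⟨j, hj⟩
  exact pushCofanIsColimit hH_id (fun V h => h)

end Assemble

end Stmt12Aux


/-- Pushforward along `pure : S → Ultrafilter S`, from sheaves of types on the discrete
space `S` to sheaves of types on `Ultrafilter S`, preserves finite coproducts. -/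
theorem stmt12 (S : Type u) [TopologicalSpace S] [DiscreteTopology S] :
    Limits.PreservesFiniteCoproducts (TopCat.Sheaf.pushforward (Type u) (pureHom S)) := by
  constructor
  intro J
  constructor
  intro K
  have e : Discrete.functor (fun j => K.obj ⟨j⟩) ≅ K := Discrete.natIso (fun i => Iso.refl _)
  haveI := Limits.preservesColimit_of_preserves_colimit_cocone
    (Stmt12Aux.cofanIsColimit (fun j => K.obj ⟨j⟩))
    (Stmt12Aux.pushCofanIsColimit (Stmt12Aux.hH_pure (fun j => K.obj ⟨j⟩)) Stmt12Aux.hD_pure)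
  exact Limits.preservesColimit_of_iso_diagram _ e
end

section
/- Let X be a sober topological space (X is T0 and every irreducible closed subset of X has a generic point) and let K be any topological space. Then the map sending a continuous map f : K → X to the frame homomorphism Opens X → Opens K given by U ↦ f⁻¹(U) is a bijection onto the set of all frame homomorphisms Opens X → Opens K. Moreover, it is an order isomorphism, where continuous maps K → X are ordered by pointwise specialization (f ≤ g if and only if for every k ∈ K, f(k) lies in the closure of {g(k)}) and frame homomorphisms are ordered pointwise. -/
open TopologicalSpace

/-- For a sober space `X` and any space `K`, the map `f ↦ (U ↦ f⁻¹(U))` is a bijection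
from continuous maps `K → X` onto frame homomorphisms `Opens X → Opens K`, and it is an
order isomorphism for the pointwise specialization order on continuous maps and the
pointwise order on frame homomorphisms. -/
theorem stmt16 {X K : Type*} [TopologicalSpace X] [TopologicalSpace K]
    [T0Space X] [QuasiSober X] :
    Function.Bijective (fun f : C(K, X) => Opens.comap f) ∧
    ∀ f g : C(K, X),
      ((∀ k : K, f k ∈ closure {g k}) ↔ ∀ U : Opens X, Opens.comap f U ≤ Opens.comap g U) := by
  constructor
  · refine ⟨Opens.comap_injective, fun φ => ?_⟩
    -- For each k, consider the largest open V k with k ∉ φ (V k)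
    set V : K → Opens X := fun k => ⨆ (U : Opens X) (_ : k ∉ φ U), U with hV
    have hkV : ∀ k, k ∉ φ (V k) := by
      intro k hk
      simp only [hV, map_iSup, Opens.mem_iSup] at hk
      obtain ⟨U, hU, hkU⟩ := hk
      exact hU hkU
    have hmem : ∀ k (U : Opens X), k ∈ φ U ↔ ¬ (U : Set X) ⊆ ((V k : Set X)) := by
      intro k U
      constructor
      · intro hk hsub
        exact hkV k ((OrderHomClass.mono φ (show U ≤ V k from hsub)) hk)
      · intro h
        by_contra hk
        exact h (le_iSup₂ (f := fun (U : Opens X) (_ : k ∉ φ U) => U) U hk)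
    -- the closed set Z k = (V k)ᶜ is irreducible
    have hZ : ∀ k, IsIrreducible ((V k : Set X)ᶜ) := by
      intro k
      constructor
      · rw [Set.nonempty_compl]
        intro h
        have : k ∈ φ (V k) := by
          have : V k = ⊤ := by ext x; simp [Set.ext_iff] at h ⊢; exact h x
          rw [this]; simp
        exact hkV k this
      · rw [isPreirreducible_iff_isClosed_union_isClosed]
        intro Z₁ Z₂ h₁ h₂ hsub
        by_contra h
        push_neg at h
        obtain ⟨h1, h2⟩ := h
        rw [Set.not_subset] at h1 h2
        obtain ⟨x₁, hx₁, hx₁'⟩ := h1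
        obtain ⟨x₂, hx₂, hx₂'⟩ := h2
        have hk₁ : k ∈ φ ⟨Z₁ᶜ, h₁.isOpen_compl⟩ := by
          rw [hmem]
          intro hs
          exact hx₁' (by by_contra hc; exact hx₁ (hs hc))
        have hk₂ : k ∈ φ ⟨Z₂ᶜ, h₂.isOpen_compl⟩ := by
          rw [hmem]
          intro hs
          exact hx₂' (by by_contra hc; exact hx₂ (hs hc))
        have : k ∈ φ (⟨Z₁ᶜ, h₁.isOpen_compl⟩ ⊓ ⟨Z₂ᶜ, h₂.isOpen_compl⟩) := by
          rw [map_inf]; exact ⟨hk₁, hk₂⟩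
        rw [hmem] at this
        apply this
        intro x hx
        by_contra hxV
        have := hsub hxV
        rcases this with h | h
        · exact hx.1 h
        · exact hx.2 h
    -- generic points
    have hclosed : ∀ k, IsClosed ((V k : Set X)ᶜ) := fun k => (V k).2.isClosed_compl
    set f : K → X := fun k => (hZ k).genericPoint with hf
    have hgen : ∀ k, closure ({f k} : Set X) = (V k : Set X)ᶜ := fun k =>
      ((hZ k).isGenericPoint_genericPoint_closure).def.trans (hclosed k).closure_eq
    -- key: f ⁻¹' U = φ U
    have hpre : ∀ (U : Opens X), f ⁻¹' (U : Set X) = (φ U : Set K) := by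
      intro U
      ext k
      simp only [Set.mem_preimage, SetLike.mem_coe]
      rw [hmem]
      constructor
      · intro hfk hsub
        have : f k ∈ closure ({f k} : Set X) := subset_closure rfl
        rw [hgen k] at this
        exact this (hsub hfk)
      · intro h
        by_contra hfk
        -- f k ∉ U, so closure {f k} ∩ U = ∅ is false... need U meets Z k
        have hne : ((V k : Set X)ᶜ ∩ U).Nonempty := by
          rw [Set.nonempty_iff_ne_empty]
          intro he
          apply h
          intro x hx
          by_contra hxV
          exact (Set.eq_empty_iff_forall_notMem.mp he x) ⟨hxV, hx⟩
        rw [← hgen k] at hne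
        obtain ⟨x, hx1, hx2⟩ := hne
        have := mem_closure_iff.mp hx1 U U.2 hx2
        obtain ⟨y, hy, hy'⟩ := this
        exact hfk (hy' ▸ hy)
    have hcont : Continuous f := by
      rw [continuous_def]
      intro s hs
      have := hpre ⟨s, hs⟩
      show IsOpen (f ⁻¹' ((⟨s, hs⟩ : Opens X) : Set X))
      rw [this]
      exact (φ ⟨s, hs⟩).2
    refine ⟨⟨f, hcont⟩, ?_⟩
    apply FrameHom.ext
    intro U
    apply Opens.ext
    exact hpre U
  · intro f g
    constructor
    · intro h U k hk
      have := h k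
      rw [← specializes_iff_mem_closure] at this
      exact this.mem_open U.2 hk
    · intro h k
      rw [← specializes_iff_mem_closure, specializes_iff_forall_open]
      intro s hs hfk
      exact h ⟨s, hs⟩ hfk
end

section
/- Let K be an extremally disconnected compact Hausdorff topological space and let X be a spectral topological space (quasicompact, sober, quasiseparated, with a basis of quasicompact open subsets). Order the set C(K, X) of continuous maps K → X by pointwise specialization: f ≤ g if and only if for every k ∈ K, f(k) lies in the closure of {g(k)}. Then the inclusion of the subposet Map^qc(K, X) of quasicompact continuous maps (those for which the preimage of every quasicompact open subset of X is clopen, equivalently compact open, in K) into C(K, X) admits a left adjoint: there is a monotone map L : C(K, X) → Map^qc(K, X) such that for every continuous f : K → X and every quasicompact continuous g : K → X, L(f) ≤ g if and only if f ≤ g. -/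
open TopologicalSpace

/-- The pointwise specialization order on maps into a topological space:
`f ≤ g` iff for every `k`, `f k` lies in the closure of `{g k}`. -/
def specLE {K X : Type*} [TopologicalSpace X] (f g : K → X) : Prop :=
  ∀ k : K, f k ∈ closure {g k}

/-- A map is quasicompact if the preimage of every quasicompact open subset is clopen. -/
def IsQCMap {K X : Type*} [TopologicalSpace K] [TopologicalSpace X] (f : K → X) : Prop :=
  ∀ U : Set X, IsOpen U → IsCompact U → IsClopen (f ⁻¹' U)

section Aux

variable {K X : Type*} [TopologicalSpace K] [ExtremallyDisconnected K]
    [TopologicalSpace X]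

/-- In an extremally disconnected space, closures of open sets intersect along the closure
of the intersection. -/
lemma ed_closure_inter {A B : Set K} (hA : IsOpen A) (hB : IsOpen B) :
    closure A ∩ closure B ⊆ closure (A ∩ B) := by
  have h1 : IsOpen (closure A) := ExtremallyDisconnected.open_closure A hA
  have h2 : closure A ∩ closure B ⊆ closure (closure A ∩ B) := h1.inter_closure
  refine h2.trans ?_
  have h3 : closure A ∩ B ⊆ closure (A ∩ B) := by
    intro x hx
    have := hB.inter_closure (t := A) ⟨hx.2, hx.1⟩
    rwa [Set.inter_comm] at this
  calc closure (closure A ∩ B) ⊆ closure (closure (A ∩ B)) := closure_mono h3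
    _ = closure (A ∩ B) := closure_closure

variable [CompactSpace X] [QuasiSober X] [QuasiSeparatedSpace X]

/-- The candidate "closed support" of the quasicompactification at a point. -/
def Zset (f : K → X) (k : K) : Set X :=
  {x | ∀ U : Set X, IsCompact U → IsOpen U → x ∈ U → k ∈ closure (f ⁻¹' U)}

lemma Zset_eq (f : K → X) (k : K) :
    Zset f k =
      ⋂ U ∈ {U : Set X | IsCompact U ∧ IsOpen U ∧ k ∉ closure (f ⁻¹' U)}, Uᶜ := by
  ext x
  simp only [Zset, Set.mem_setOf_eq, Set.mem_iInter, Set.mem_compl_iff]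
  constructor
  · rintro h U ⟨hc, ho, hk⟩ hxU
    exact hk (h U hc ho hxU)
  · intro h U hc ho hxU
    by_contra hk
    exact h U ⟨hc, ho, hk⟩ hxU

lemma Zset_isClosed (f : K → X) (k : K) : IsClosed (Zset f k) := by
  rw [Zset_eq]
  exact isClosed_biInter fun U hU => hU.2.1.isClosed_compl

/-- A quasicompact open set meets `Zset f k` iff `k` lies in the closure of its preimage. -/
lemma Zset_meets (f : K → X) (k : K) {U : Set X} (hc : IsCompact U) (ho : IsOpen U) :
    (U ∩ Zset f k).Nonempty ↔ k ∈ closure (f ⁻¹' U) := by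
  constructor
  · rintro ⟨x, hxU, hxZ⟩
    exact hxZ U hc ho hxU
  · intro hk
    by_contra hne
    rw [Set.not_nonempty_iff_eq_empty] at hne
    -- U is covered by "bad" quasicompact opens
    set S := {V : Set X | IsCompact V ∧ IsOpen V ∧ k ∉ closure (f ⁻¹' V)} with hS
    have hcover : U ⊆ ⋃ V : S, (V : Set X) := by
      intro x hxU
      have hxZ : x ∉ Zset f k := by
        intro hx
        exact Set.eq_empty_iff_forall_notMem.mp hne x ⟨hxU, hx⟩
      simp only [Zset, Set.mem_setOf_eq, not_forall] at hxZ
      obtain ⟨V, hVc, hVo, hxV, hkV⟩ := hxZ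
      exact Set.mem_iUnion.mpr ⟨⟨V, hVc, hVo, hkV⟩, hxV⟩
    obtain ⟨t, ht⟩ := hc.elim_finite_subcover (fun V : S => (V : Set X))
      (fun V => V.2.2.1) hcover
    -- closure of preimage of U is contained in finite union of closures
    have hsub : f ⁻¹' U ⊆ ⋃ V ∈ t, closure (f ⁻¹' (V : Set X)) := by
      intro y hy
      have := ht hy
      obtain ⟨V, hVt, hyV⟩ := Set.mem_iUnion₂.mp this
      exact Set.mem_iUnion₂.mpr ⟨V, hVt, subset_closure hyV⟩
    have hclosed : IsClosed (⋃ V ∈ t, closure (f ⁻¹' (V : Set X))) :=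
      t.finite_toSet.isClosed_biUnion fun V _ => isClosed_closure
    have hk2 : k ∈ ⋃ V ∈ t, closure (f ⁻¹' (V : Set X)) :=
      closure_minimal hsub hclosed hk
    obtain ⟨V, _, hkV⟩ := Set.mem_iUnion₂.mp hk2
    exact V.2.2.2 hkV

lemma Zset_irreducible (hbasis : IsTopologicalBasis {U : Set X | IsCompact U ∧ IsOpen U})
    {f : K → X} (hf : Continuous f) (k : K) : IsIrreducible (Zset f k) := by
  constructor
  · -- nonempty, from U = univ
    have : ((Set.univ : Set X) ∩ Zset f k).Nonempty := by
      rw [Zset_meets f k isCompact_univ isOpen_univ]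
      simp only [Set.preimage_univ]
      rw [closure_univ]
      trivial
    simpa using this
  · intro u v hu hv ⟨x1, hx1Z, hx1u⟩ ⟨x2, hx2Z, hx2v⟩
    obtain ⟨U1, ⟨hU1c, hU1o⟩, hx1U, hU1u⟩ := hbasis.exists_subset_of_mem_open hx1u hu
    obtain ⟨U2, ⟨hU2c, hU2o⟩, hx2U, hU2v⟩ := hbasis.exists_subset_of_mem_open hx2v hv
    have h1 : k ∈ closure (f ⁻¹' U1) := (Zset_meets f k hU1c hU1o).mp ⟨x1, hx1U, hx1Z⟩
    have h2 : k ∈ closure (f ⁻¹' U2) := (Zset_meets f k hU2c hU2o).mp ⟨x2, hx2U, hx2Z⟩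
    have h12 : k ∈ closure (f ⁻¹' (U1 ∩ U2)) := by
      have := ed_closure_inter (hU1o.preimage hf) (hU2o.preimage hf) ⟨h1, h2⟩
      rwa [← Set.preimage_inter] at this
    have hc12 : IsCompact (U1 ∩ U2) :=
      QuasiSeparatedSpace.inter_isCompact U1 U2 hU1o hU1c hU2o hU2c
    obtain ⟨x, hxU, hxZ⟩ := (Zset_meets f k hc12 (hU1o.inter hU2o)).mpr h12
    exact ⟨x, hxZ, hU1u hxU.1, hU2v hxU.2⟩

end Aux

/-- Let `K` be an extremally disconnected compact Hausdorff space and `X` a spectral space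
(quasicompact, sober, quasiseparated, with a basis of quasicompact opens).  The inclusion
of quasicompact continuous maps `K → X` into all continuous maps, for the pointwise
specialization order, admits a left adjoint. -/
theorem stmt19 {K X : Type*} [TopologicalSpace K] [ExtremallyDisconnected K]
    [CompactSpace K] [T2Space K]
    [TopologicalSpace X] [CompactSpace X] [T0Space X] [QuasiSober X] [QuasiSeparatedSpace X]
    (hbasis : IsTopologicalBasis {U : Set X | IsCompact U ∧ IsOpen U}) :
    ∃ L : C(K, X) → C(K, X),
      (∀ f : C(K, X), IsQCMap (L f)) ∧
      (∀ f g : C(K, X), specLE f g → specLE (L f) (L g)) ∧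
      (∀ f g : C(K, X), IsQCMap g → (specLE (L f) g ↔ specLE f g)) := by
  classical
  -- generic point of Zset f k
  have hgen : ∀ (f : C(K, X)) (k : K), ∃ x : X, closure {x} = Zset f k := fun f k =>
    QuasiSober.sober (Zset_irreducible hbasis f.continuous k) (Zset_isClosed (⇑f) k)
  set L0 : C(K, X) → K → X := fun f k => (hgen f k).choose with hL0
  -- membership characterization
  have hmem : ∀ (f : C(K, X)) (k : K) (U : Set X), IsOpen U →
      (L0 f k ∈ U ↔ (U ∩ Zset (⇑f) k).Nonempty) := by
    intro f k U hU
    have hspec : closure {L0 f k} = Zset (⇑f) k := (hgen f k).choose_spec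
    constructor
    · intro hx
      exact ⟨L0 f k, hx, hspec ▸ subset_closure rfl⟩
    · rintro ⟨x, hxU, hxZ⟩
      rw [← hspec] at hxZ
      obtain ⟨y, hy, hy'⟩ := mem_closure_iff.mp hxZ U hU hxU
      rw [Set.mem_singleton_iff] at hy'
      rwa [hy'] at hy
  -- preimage of qc open under L0 f is the closure of the preimage under f
  have hpre : ∀ (f : C(K, X)) (U : Set X), IsCompact U → IsOpen U →
      L0 f ⁻¹' U = closure (f ⁻¹' U) := by
    intro f U hc ho
    ext k
    rw [Set.mem_preimage, hmem f k U ho, Zset_meets (⇑f) k hc ho]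
  -- continuity of L0 f
  have hcont : ∀ f : C(K, X), Continuous (L0 f) := by
    intro f
    rw [hbasis.continuous_iff]
    rintro U ⟨hc, ho⟩
    rw [hpre f U hc ho]
    exact ExtremallyDisconnected.open_closure _ (ho.preimage f.continuous)
  -- specLE characterization via qc opens
  have hle : ∀ f g : K → X, specLE f g ↔
      ∀ U : Set X, IsCompact U → IsOpen U → f ⁻¹' U ⊆ g ⁻¹' U := by
    intro f g
    constructor
    · intro h U _ ho k hk
      obtain ⟨y, hy, hy'⟩ := mem_closure_iff.mp (h k) U ho hk
      rw [Set.mem_singleton_iff] at hy'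
      rwa [hy'] at hy
    · intro h k
      rw [hbasis.mem_closure_iff]
      rintro U ⟨hc, ho⟩ hfk
      exact ⟨g k, h U hc ho hfk, rfl⟩
  refine ⟨fun f => ⟨L0 f, hcont f⟩, ?_, ?_, ?_⟩
  · -- quasicompactness of L f
    intro f U ho hc
    show IsClopen (L0 f ⁻¹' U)
    rw [hpre f U hc ho]
    exact ⟨isClosed_closure, ExtremallyDisconnected.open_closure _ (ho.preimage f.continuous)⟩
  · -- monotone
    intro f g hfg
    rw [hle]
    intro U hc ho
    simp only [ContinuousMap.coe_mk]
    rw [hpre f U hc ho, hpre g U hc ho]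
    exact closure_mono fun k hk => (hle f g).mp hfg U hc ho hk
  · -- adjunction
    intro f g hg
    constructor
    · intro h
      -- f ≤ L f ≤ g
      have h1 : specLE (f : K → X) (L0 f) := by
        rw [hle]
        intro U hc ho
        rw [hpre f U hc ho]
        exact subset_closure
      rw [hle] at h1 h ⊢
      simp only [ContinuousMap.coe_mk] at h
      exact fun U hc ho => (h1 U hc ho).trans (h U hc ho)
    · intro h
      rw [hle] at h ⊢
      intro U hc ho
      simp only [ContinuousMap.coe_mk]
      rw [hpre f U hc ho]
      exact closure_minimal (h U hc ho) (hg U ho hc).1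
end
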